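/- Intertwining construction (Diaconis–Fill): let P: A×B, Λ: B×A, Q: A×A', Λ': B'×A', R: B×B' be stochastic matrices on finite sets with commutation relation Λ·Q = R·Λ' (as matrices B×A'), and suppose probability measure ν on B satisfies νΛ = μ on A. Define the bivariate kernel T((a,b),(a',b')) supported on pairs with (QΛ'^T-compatibility): T((a,b),(a',b')) = [R(b,b')·Λ'(b',a')·1_{Q(a,a')>0}] / (RΛ')(b,a') when (RΛ')(b,a') > 0 (with a' drawn from the Q-step from a). Then the B'-marginal of the evolved measure is νR. Specialized to the paper: if Y(t) satisfies P^{S+1,t}_{S-}(Y(t),X(t)) > 0 and Z is distributed as Prob{Z} = P^{S+1,t}_{t+}(Y(t),Z)·P^{S+1,t+1}_{S-}(Z,X(t+1)) / (P^{S+1,t}_{t+}P^{S+1,t+1}_{S-})(Y(t),X(t+1)), then this conditional distribution is well-defined, i.e. the denominator (P^{S+1,t}_{t+}P^{S+1,t+1}_{S-})(Y(t),X(t+1)) is strictly positive, given that P^{S,t}_{t+}(X(t),X(t+1)) > 0. -/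

import Mathlib

open Finset

noncomputable def poch (a : ℝ) (n : ℕ) : ℝ := ∏ k ∈ Finset.range n, (a + k)

noncomputable def pairProd {N : ℕ} (f : Fin N → ℤ) : ℝ :=
  ∏ p ∈ Finset.univ.filter (fun p : Fin N × Fin N => p.1 < p.2), ((f p.2 - f p.1 : ℤ) : ℝ)

noncomputable def secX (N T S t : ℕ) : Finset ℤ :=
  Finset.Icc (max 0 ((t : ℤ) + S - T)) (min ((t : ℤ) + N - 1) ((S : ℤ) + N - 1))

noncomputable def Xcal (N T S t : ℕ) : Finset (Fin N → ℤ) :=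
  (Fintype.piFinset fun _ => secX N T S t).filter
    (fun f => ∀ i j : Fin N, i < j → f i < f j)

noncomputable def Ptp (N T S t : ℕ) (X Y : Fin N → ℤ) : ℝ :=
  if ∀ i, Y i = X i ∨ Y i = X i + 1 then
    (pairProd Y *
      ∏ i, (if Y i = X i + 1 then (N : ℝ) + S - X i - 1 else (X i : ℝ) + T - t - S)) /
      (poch ((T : ℝ) - t) N * pairProd X)
  else 0

noncomputable def PSm (N T S t : ℕ) (X Y : Fin N → ℤ) : ℝ :=
  if ∀ i, Y i = X i ∨ Y i = X i - 1 then
    (pairProd Y *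
      ∏ i, (if Y i = X i - 1 then (X i : ℝ) else (S : ℝ) + N - 1 - X i)) /
      (poch (S : ℝ) N * pairProd X)
  else 0

lemma poch_pos {a : ℝ} (ha : 0 < a) (n : ℕ) : 0 < poch a n := by
  unfold poch
  exact Finset.prod_pos fun k _ => by positivity

lemma pairProd_pos {N : ℕ} {f : Fin N → ℤ} (hf : ∀ i j : Fin N, i < j → f i < f j) :
    0 < pairProd f := by
  unfold pairProd
  apply Finset.prod_pos
  intro p hp
  simp only [Finset.mem_filter] at hp
  have h1 := hf p.1 p.2 hp.2
  have : (0 : ℤ) < f p.2 - f p.1 := by omega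
  exact_mod_cast this

lemma mem_Xcal {N T S t : ℕ} {f : Fin N → ℤ} (hf : f ∈ Xcal N T S t) :
    (∀ i, (0 ≤ f i ∧ (t:ℤ) + S - T ≤ f i) ∧ (f i ≤ (t:ℤ) + N - 1 ∧ f i ≤ (S:ℤ) + N - 1))
      ∧ ∀ i j : Fin N, i < j → f i < f j := by
  simp only [Xcal, Finset.mem_filter, Fintype.mem_piFinset, secX, Finset.mem_Icc,
    le_min_iff, max_le_iff] at hf
  exact ⟨fun i => (hf.1 i), hf.2⟩

lemma Ptp_nonneg {N T S t : ℕ} (htT : t < T) {X Y : Fin N → ℤ}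
    (hXlb : ∀ i, (t:ℤ) + S - T ≤ X i) (hXub : ∀ i, X i ≤ (S:ℤ) + N - 1)
    (hXmono : ∀ i j : Fin N, i < j → X i < X j)
    (hYmono : ∀ i j : Fin N, i < j → Y i < Y j) :
    0 ≤ Ptp N T S t X Y := by
  unfold Ptp
  split
  · apply div_nonneg
    · apply mul_nonneg (pairProd_pos hYmono).le
      apply Finset.prod_nonneg
      intro i _
      split
      · have h := hXub i
        have h' : (X i : ℝ) ≤ (S:ℝ) + N - 1 := by exact_mod_cast h
        linarith
      · have h := hXlb i
        have h' : ((t:ℝ) + S - T) ≤ (X i : ℝ) := by exact_mod_cast h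
        linarith
    · apply mul_nonneg _ (pairProd_pos hXmono).le
      have hT : (0:ℝ) < (T:ℝ) - t := by
        have : (t:ℝ) < T := by exact_mod_cast htT
        linarith
      exact (poch_pos hT N).le
  · exact le_refl _

lemma PSm_nonneg {N T S t : ℕ} (hS : 0 < S) {X Y : Fin N → ℤ}
    (hXlb : ∀ i, 0 ≤ X i) (hXub : ∀ i, X i ≤ (S:ℤ) + N - 1)
    (hXmono : ∀ i j : Fin N, i < j → X i < X j)
    (hYmono : ∀ i j : Fin N, i < j → Y i < Y j) :
    0 ≤ PSm N T S t X Y := by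
  unfold PSm
  split
  · apply div_nonneg
    · apply mul_nonneg (pairProd_pos hYmono).le
      apply Finset.prod_nonneg
      intro i _
      split
      · exact_mod_cast hXlb i
      · have h := hXub i
        have h' : (X i : ℝ) ≤ (S:ℝ) + N - 1 := by exact_mod_cast h
        linarith
    · apply mul_nonneg _ (pairProd_pos hXmono).le
      exact (poch_pos (by exact_mod_cast hS) N).le
  · exact le_refl _

/-- Diaconis–Fill intertwining construction, plus the key positivity of the
denominator in the paper's sequential update. -/
theorem diaconis_fill
    -- abstract part
    (A A' B B' : Type) [Fintype A] [Fintype A'] [Fintype B] [Fintype B']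
    (P : A → B → ℝ) (Λ : B → A → ℝ) (Q : A → A' → ℝ) (Λ' : B' → A' → ℝ) (R : B → B' → ℝ)
    (hP0 : ∀ a b, 0 ≤ P a b) (hP1 : ∀ a, ∑ b : B, P a b = 1)
    (hΛ0 : ∀ b a, 0 ≤ Λ b a) (hΛ1 : ∀ b, ∑ a : A, Λ b a = 1)
    (hQ0 : ∀ a a', 0 ≤ Q a a') (hQ1 : ∀ a, ∑ a' : A', Q a a' = 1)
    (hΛ'0 : ∀ b' a', 0 ≤ Λ' b' a') (hΛ'1 : ∀ b', ∑ a' : A', Λ' b' a' = 1)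
    (hR0 : ∀ b b', 0 ≤ R b b') (hR1 : ∀ b, ∑ b' : B', R b b' = 1)
    (hcomm : ∀ (b : B) (a' : A'),
      ∑ a : A, Λ b a * Q a a' = ∑ b' : B', R b b' * Λ' b' a')
    (ν : B → ℝ) (hν0 : ∀ b, 0 ≤ ν b) (hν1 : ∑ b : B, ν b = 1)
    (μ : A → ℝ) (hνΛ : ∀ a, μ a = ∑ b : B, ν b * Λ b a)
    -- concrete part: parameters and sections for the paper's update S → S+1
    (N T S t : ℕ) (hN : 1 ≤ N) (hS : S + 1 ≤ T) (ht : t < T)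
    (Yt : Fin N → ℤ) (hYt : Yt ∈ Xcal N T (S + 1) t)
    (Xt : Fin N → ℤ) (hXt : Xt ∈ Xcal N T S t)
    (Xt1 : Fin N → ℤ) (hXt1 : Xt1 ∈ Xcal N T S (t + 1))
    (hpos1 : 0 < PSm N T (S + 1) t Yt Xt)
    (hpos2 : 0 < Ptp N T S t Xt Xt1) :
    -- the B'-marginal of the evolved bivariate measure is νR
    (∀ b' : B',
      (∑ a' : A', ∑ a : A, ∑ b : B,
        (ν b * Λ b a) *
          (if 0 < ∑ b'' : B', R b b'' * Λ' b'' a' then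
            Q a a' * R b b' * Λ' b' a' / (∑ b'' : B', R b b'' * Λ' b'' a')
          else 0)) = ∑ b : B, ν b * R b b') ∧
    -- well-definedness of the conditional law of Z: the denominator is positive
    0 < ∑ Z ∈ Xcal N T (S + 1) (t + 1),
        Ptp N T (S + 1) t Yt Z * PSm N T (S + 1) (t + 1) Z Xt1 := by
  constructor
  · -- abstract part
    intro b'
    have key : ∀ (a' : A') (b : B),
        (∑ a : A, (ν b * Λ b a) *
          (if 0 < ∑ b'' : B', R b b'' * Λ' b'' a' then
            Q a a' * R b b' * Λ' b' a' / (∑ b'' : B', R b b'' * Λ' b'' a')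
          else 0)) = ν b * (R b b' * Λ' b' a') := by
      intro a' b
      by_cases h : 0 < ∑ b'' : B', R b b'' * Λ' b'' a'
      · simp only [if_pos h]
        have e1 : ∀ a : A, (ν b * Λ b a) *
            (Q a a' * R b b' * Λ' b' a' / (∑ b'' : B', R b b'' * Λ' b'' a'))
            = (Λ b a * Q a a') *
              (ν b * (R b b' * Λ' b' a') / (∑ b'' : B', R b b'' * Λ' b'' a')) := by
          intro a; ring
        rw [Finset.sum_congr rfl (fun a _ => e1 a), ← Finset.sum_mul, hcomm b a',
          mul_comm, div_mul_cancel₀ _ (ne_of_gt h)]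
      · simp only [if_neg h, mul_zero, Finset.sum_const_zero]
        have hD0 : (∑ b'' : B', R b b'' * Λ' b'' a') = 0 :=
          le_antisymm (not_lt.mp h)
            (Finset.sum_nonneg fun b'' _ => mul_nonneg (hR0 b b'') (hΛ'0 b'' a'))
        have h0 : R b b' * Λ' b' a' = 0 :=
          (Finset.sum_eq_zero_iff_of_nonneg
            (fun b'' _ => mul_nonneg (hR0 b b'') (hΛ'0 b'' a'))).mp hD0 b' (Finset.mem_univ b')
        rw [h0, mul_zero]
    calc (∑ a' : A', ∑ a : A, ∑ b : B,
        (ν b * Λ b a) *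
          (if 0 < ∑ b'' : B', R b b'' * Λ' b'' a' then
            Q a a' * R b b' * Λ' b' a' / (∑ b'' : B', R b b'' * Λ' b'' a')
          else 0))
        = ∑ a' : A', ∑ b : B, ν b * (R b b' * Λ' b' a') := by
          refine Finset.sum_congr rfl fun a' _ => ?_
          rw [Finset.sum_comm]
          exact Finset.sum_congr rfl fun b _ => key a' b
      _ = ∑ b : B, ∑ a' : A', ν b * (R b b' * Λ' b' a') := Finset.sum_comm
      _ = ∑ b : B, ν b * R b b' := by
          refine Finset.sum_congr rfl fun b _ => ?_
          have : ∀ a' : A', ν b * (R b b' * Λ' b' a') = (ν b * R b b') * Λ' b' a' := by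
            intro a'; ring
          rw [Finset.sum_congr rfl (fun a' _ => this a'), ← Finset.mul_sum, hΛ'1 b', mul_one]
  · -- concrete part
    obtain ⟨hYb, hYmono⟩ := mem_Xcal hYt
    obtain ⟨hXb, hXmono⟩ := mem_Xcal hXt
    obtain ⟨hX1b, hX1mono⟩ := mem_Xcal hXt1
    have hC1 : ∀ i, Xt i = Yt i ∨ Xt i = Yt i - 1 := by
      by_contra h
      rw [PSm, if_neg h] at hpos1
      exact lt_irrefl 0 hpos1
    have hC2 : ∀ i, Xt1 i = Xt i ∨ Xt1 i = Xt i + 1 := by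
      by_contra h
      rw [Ptp, if_neg h] at hpos2
      exact lt_irrefl 0 hpos2
    -- positivity of each factor of the numerator of hpos2
    have htR : (0:ℝ) < (T:ℝ) - t := by
      have : (t:ℝ) < T := by exact_mod_cast ht
      linarith
    have hfac2nn : ∀ i : Fin N,
        0 ≤ (if Xt1 i = Xt i + 1 then (N:ℝ) + S - Xt i - 1 else (Xt i : ℝ) + T - t - S) := by
      intro i
      split
      · have h := (hXb i).2.2
        have h' : (Xt i : ℝ) ≤ (S:ℝ) + N - 1 := by exact_mod_cast h
        linarith
      · have h := (hXb i).1.2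
        have h' : ((t:ℝ) + S - T) ≤ (Xt i : ℝ) := by exact_mod_cast h
        linarith
    have hprod2 : 0 < ∏ i : Fin N,
        (if Xt1 i = Xt i + 1 then (N:ℝ) + S - Xt i - 1 else (Xt i : ℝ) + T - t - S) := by
      rw [Ptp, if_pos hC2] at hpos2
      have hden : 0 < poch ((T:ℝ) - t) N * pairProd Xt :=
        mul_pos (poch_pos htR N) (pairProd_pos hXmono)
      have hnum : 0 < pairProd Xt1 *
          ∏ i : Fin N, (if Xt1 i = Xt i + 1 then (N:ℝ) + S - Xt i - 1
            else (Xt i : ℝ) + T - t - S) := by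
        rcases div_pos_iff.mp hpos2 with ⟨h1, _⟩ | ⟨_, h2⟩
        · exact h1
        · linarith
      rcases mul_pos_iff.mp hnum with ⟨_, h1⟩ | ⟨h1, _⟩
      · exact h1
      · have := pairProd_pos hX1mono; linarith
    have hfac2 : ∀ i : Fin N,
        0 < (if Xt1 i = Xt i + 1 then (N:ℝ) + S - Xt i - 1 else (Xt i : ℝ) + T - t - S) := by
      intro i
      rcases eq_or_lt_of_le (hfac2nn i) with h0 | h
      · exact absurd (Finset.prod_eq_zero (Finset.mem_univ i) h0.symm) (ne_of_gt hprod2)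
      · exact h
    -- the witness
    set Z : Fin N → ℤ := fun i => min (Yt i) (Xt1 i) + 1 with hZdef
    have hZi : ∀ i, Z i = min (Yt i) (Xt1 i) + 1 := fun i => rfl
    have hZmono : ∀ i j : Fin N, i < j → Z i < Z j := by
      intro i j hij
      have h1 := hYmono i j hij
      have h2 := hX1mono i j hij
      rw [hZi i, hZi j]; omega
    have hZmem : Z ∈ Xcal N T (S + 1) (t + 1) := by
      simp only [Xcal, Finset.mem_filter, Fintype.mem_piFinset, secX, Finset.mem_Icc]
      refine ⟨fun i => ?_, hZmono⟩
      have h1 := hYb i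
      have h2 := hX1b i
      rw [hZi i]
      push_cast
      push_cast at h1 h2
      omega
    have hcondP : ∀ i, Z i = Yt i ∨ Z i = Yt i + 1 := by
      intro i
      have := hC1 i; have := hC2 i
      rw [hZi i]; omega
    have hcondS : ∀ i, Xt1 i = Z i ∨ Xt1 i = Z i - 1 := by
      intro i
      have := hC1 i; have := hC2 i
      rw [hZi i]; omega
    have hterm : 0 < Ptp N T (S + 1) t Yt Z * PSm N T (S + 1) (t + 1) Z Xt1 := by
      apply mul_pos
      · rw [Ptp, if_pos hcondP]
        apply div_pos
        · apply mul_pos (pairProd_pos hZmono)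
          apply Finset.prod_pos
          intro i _
          by_cases hi : Z i = Yt i + 1
          · rw [if_pos hi]
            have hmin : Yt i ≤ Xt1 i := by rw [hZi i] at hi; omega
            have hub := (hX1b i).2.2
            have hz : (0:ℤ) < (N:ℤ) + (S + 1) - Yt i - 1 := by omega
            have hz' : ((0:ℤ):ℝ) < (((N:ℤ) + (S + 1) - Yt i - 1 : ℤ) : ℝ) :=
              Int.cast_lt.mpr hz
            push_cast at hz' ⊢
            linarith
          · rw [if_neg hi]
            have hx : Xt1 i = Yt i - 1 := by
              have := hcondP i; rw [hZi i] at *; omega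
            have hxx : Xt1 i = Xt i ∧ Xt i = Yt i - 1 := by
              have := hC1 i; have := hC2 i; omega
            have h2 := hfac2 i
            rw [if_neg (by omega)] at h2
            have hc : (Xt i : ℝ) = (Yt i : ℝ) - 1 := by
              have := hxx.2; push_cast [this]; ring
            push_cast at h2 ⊢
            linarith
        · exact mul_pos (poch_pos htR N) (pairProd_pos hYmono)
      · rw [PSm, if_pos hcondS]
        apply div_pos
        · apply mul_pos (pairProd_pos hX1mono)
          apply Finset.prod_pos
          intro i _
          by_cases hi : Xt1 i = Z i - 1
          · rw [if_pos hi]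
            have h1 := (hYb i).1.1
            have h2 := (hX1b i).1.1
            have hz : (0:ℤ) < Z i := by rw [hZi i]; omega
            exact_mod_cast hz
          · rw [if_neg hi]
            have hz : Xt1 i = Z i := (hcondS i).resolve_right hi
            have hub := (hX1b i).2.2
            have h : (0:ℤ) < (S + 1 : ℤ) + N - 1 - Z i := by omega
            have h' : ((0:ℤ):ℝ) < (((S + 1 : ℤ) + N - 1 - Z i : ℤ) : ℝ) := Int.cast_lt.mpr h
            push_cast at h' ⊢
            linarith
        · have hp : (0:ℝ) < ((S + 1 : ℕ) : ℝ) := by positivity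
          exact mul_pos (poch_pos hp N) (pairProd_pos hZmono)
    apply Finset.sum_pos'
    · intro Z' hZ'
      obtain ⟨hb, hm⟩ := mem_Xcal hZ'
      apply mul_nonneg
      · exact Ptp_nonneg ht (fun i => (hYb i).1.2) (fun i => (hYb i).2.2) hYmono hm
      · exact PSm_nonneg (Nat.succ_pos S) (fun i => (hb i).1.1) (fun i => (hb i).2.2)
          hm hX1mono
    · exact ⟨Z, hZmem, hterm⟩
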